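/- With L, λ, f, κ as in the one-dimensional grafting construction, the composition D = f ∘ κ : (0, 1+|λ|) → (0, |λ|) is constant on each interval (aₙ + f(aₙ), bₙ + f(aₙ)), is surjective when restricted to the fat Cantor set Ĺ, and pushes forward the Lebesgue measure restricted to Ĺ to the Lebesgue measure on (0,|λ|). -/

import Mathlib

open MeasureTheory Set

/-- One-dimensional grafting: the composition `D = f ∘ κ : (0,1+|λ|) → (0,|λ|)` is
constant on each interval `(aₙ + f(aₙ), bₙ + f(aₙ))`, surjective from the fat Cantor
set `Ĺ` onto `(0,|λ|)`, and pushes forward the Lebesgue measure restricted to `Ĺ` to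
the Lebesgue measure on `(0,|λ|)`. -/
theorem statement_5 (L : Set ℝ) (a b : ℕ → ℝ) (lam : Measure ℝ) [IsFiniteMeasure lam]
    (hL : L ⊆ Ioo (0:ℝ) 1)
    (hclosed : ∃ C : Set ℝ, IsClosed C ∧ L = C ∩ Ioo (0:ℝ) 1)
    (hint : interior L = ∅)
    (hnull : volume L = 0)
    (hab : ∀ n, a n < b n)
    (hcompl : Ioo (0:ℝ) 1 \ L = ⋃ n, Ioo (a n) (b n))
    (hdisj : Pairwise (Function.onFun Disjoint fun n => Ioo (a n) (b n)))
    (hconc : lam Lᶜ = 0)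
    (hatomless : ∀ x : ℝ, lam {x} = 0)
    (f : ℝ → ℝ) (hf : ∀ x, f x = (lam (Ioo 0 x)).toReal)
    (M : ℝ) (hM : M = (lam (Ioo (0:ℝ) 1)).toReal)
    (κ : ℝ → ℝ)
    (hκ : Set.InvOn κ (fun x => x + f x) (Ioo (0:ℝ) 1) (Ioo (0:ℝ) (1 + M)))
    (Lhat : Set ℝ)
    (hLhat : Lhat = Ioo (0:ℝ) (1 + M) \ ⋃ n, Ioo (a n + f (a n)) (b n + f (a n))) :
    (∀ n, ∀ x ∈ Ioo (a n + f (a n)) (b n + f (a n)),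
        ∀ y ∈ Ioo (a n + f (a n)) (b n + f (a n)), f (κ x) = f (κ y)) ∧
    Set.SurjOn (fun x => f (κ x)) Lhat (Ioo (0:ℝ) M) ∧
    Measure.map (fun x => f (κ x)) (volume.restrict Lhat) = volume.restrict (Ioo (0:ℝ) M) := by
  have hfin : ∀ s : Set ℝ, lam s ≠ ⊤ := fun s => measure_ne_top lam s
  have hf0 : ∀ x : ℝ, x ≤ 0 → f x = 0 := by
    intro x hx
    rw [hf, Ioo_eq_empty (by linarith)]
    simp
  have hfnn : ∀ x, 0 ≤ f x := fun x => by rw [hf]; exact ENNReal.toReal_nonneg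
  have hfmono : Monotone f := by
    intro x y hxy
    rw [hf, hf]
    exact ENNReal.toReal_mono (hfin _) (measure_mono (Ioo_subset_Ioo le_rfl hxy))
  have hbound : ∀ x y : ℝ, x ≤ y → f y ≤ f x + (lam (Icc x y)).toReal := by
    intro x y hxy
    rw [hf, hf]
    have hsub : Ioo 0 y ⊆ Ioo 0 x ∪ Icc x y := by
      intro t ht
      rcases lt_or_ge t x with h | h
      · exact Or.inl ⟨ht.1, h⟩
      · exact Or.inr ⟨h, le_of_lt ht.2⟩
    calc (lam (Ioo 0 y)).toReal ≤ (lam (Ioo 0 x ∪ Icc x y)).toReal :=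
          ENNReal.toReal_mono (hfin _) (measure_mono hsub)
      _ ≤ ((lam (Ioo 0 x)) + lam (Icc x y)).toReal :=
          ENNReal.toReal_mono (ENNReal.add_ne_top.2 ⟨hfin _, hfin _⟩) (measure_union_le _ _)
      _ = _ := ENNReal.toReal_add (hfin _) (hfin _)
  -- continuity of f
  have hcont : Continuous f := by
    rw [Metric.continuous_iff]
    intro x ε hε
    have hinter : ⋂ n : ℕ, Icc (x - 1/(n+1)) (x + 1/(n+1)) = {x} := by
      ext y
      simp only [mem_iInter, mem_Icc, mem_singleton_iff]
      constructor
      · intro h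
        have habs : |y - x| = 0 := by
          by_contra hne
          have hpos : 0 < |y - x| := lt_of_le_of_ne (abs_nonneg _) (Ne.symm hne)
          obtain ⟨n, hn⟩ := exists_nat_one_div_lt hpos
          have h1 := (h n).1
          have h2 := (h n).2
          have : |y - x| ≤ 1/(n+1) := abs_le.2 ⟨by linarith, by linarith⟩
          linarith
        have : y - x = 0 := abs_eq_zero.mp habs
        linarith
      · intro h
        subst h
        intro n
        have : (0:ℝ) < 1/(n+1) := by positivity
        constructor <;> linarith
    have hter : Filter.Tendsto (fun n : ℕ => lam (Icc (x - 1/(n+1)) (x + 1/(n+1)))) Filter.atTop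
        (nhds (lam {x})) := by
      have := tendsto_measure_iInter_atTop (μ := lam)
        (s := fun n : ℕ => Icc (x - 1/(n+1)) (x + 1/(n+1)))
        (fun n => measurableSet_Icc.nullMeasurableSet)
        (by
          intro n m hnm
          apply Icc_subset_Icc
          · have h1 : (1:ℝ)/(m+1) ≤ 1/(n+1) := by
              apply one_div_le_one_div_of_le (by positivity)
              exact_mod_cast by omega
            linarith
          · have h1 : (1:ℝ)/(m+1) ≤ 1/(n+1) := by
              apply one_div_le_one_div_of_le (by positivity)
              exact_mod_cast by omega
            linarith)
        ⟨0, hfin _⟩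
      rwa [hinter] at this
    rw [hatomless x] at hter
    have hter' : Filter.Tendsto (fun n : ℕ => (lam (Icc (x - 1/(n+1)) (x + 1/(n+1)))).toReal)
        Filter.atTop (nhds 0) := by
      have := (ENNReal.tendsto_toReal (a := 0) (by simp)).comp hter
      simpa [Function.comp_def] using this
    obtain ⟨n, hn⟩ := (hter'.eventually (gt_mem_nhds hε)).exists
    refine ⟨1/(n+1), by positivity, ?_⟩
    intro y hy
    rw [Real.dist_eq] at hy ⊢
    have hyx : x - 1/(n+1) ≤ y ∧ y ≤ x + 1/(n+1) := by
      have := abs_lt.mp hy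
      constructor <;> linarith [this.1, this.2]
    have hkey : ∀ u w : ℝ, u ≤ w → x - 1/(n+1) ≤ u → w ≤ x + 1/(n+1) →
        f w - f u < ε := by
      intro u w huw hu hw
      have h1 := hbound u w huw
      have h2 : lam (Icc u w) ≤ lam (Icc (x - 1/(n+1)) (x + 1/(n+1))) :=
        measure_mono (Icc_subset_Icc hu hw)
      have h3 : (lam (Icc u w)).toReal ≤ (lam (Icc (x - 1/(n+1)) (x + 1/(n+1)))).toReal :=
        ENNReal.toReal_mono (hfin _) h2
      linarith
    have hδ : (0:ℝ) < 1/(n+1) := by positivity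
    rcases le_total y x with h | h
    · have := hkey y x h hyx.1 (by linarith)
      have hmon := hfmono h
      rw [abs_lt]
      constructor <;> linarith
    · have := hkey x y h (by linarith) hyx.2
      have hmon := hfmono h
      rw [abs_lt]
      constructor <;> linarith
  set g : ℝ → ℝ := fun x => x + f x with hg
  have f1M : f 1 = M := by rw [hf, hM]
  have hgsm : StrictMono g := fun x y hxy => by
    simp only [hg]
    have := hfmono hxy.le
    linarith
  have hg0 : g 0 = 0 := by simp only [hg]; rw [hf0 0 le_rfl]; ring
  have hg1 : g 1 = 1 + M := by simp only [hg]; rw [f1M]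
  have hIab : ∀ n, Ioo (a n) (b n) ⊆ Ioo (0:ℝ) 1 \ L := by
    intro n x hx
    rw [hcompl]
    exact mem_iUnion.mpr ⟨n, hx⟩
  have ha0 : ∀ n, 0 ≤ a n := by
    intro n
    by_contra h
    push_neg at h
    obtain ⟨t, ht1, ht2⟩ := exists_between (lt_min h (hab n))
    have hmem := hIab n ⟨ht1, lt_of_lt_of_le ht2 (min_le_right _ _)⟩
    have : t < 0 := lt_of_lt_of_le ht2 (min_le_left _ _)
    linarith [hmem.1.1]
  have hb1 : ∀ n, b n ≤ 1 := by
    intro n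
    by_contra h
    push_neg at h
    obtain ⟨t, ht1, ht2⟩ := exists_between (max_lt h (hab n) : max 1 (a n) < b n)
    have hmem := hIab n ⟨lt_of_le_of_lt (le_max_right _ _) ht1, ht2⟩
    have : 1 < t := lt_of_le_of_lt (le_max_left _ _) ht1
    linarith [hmem.1.2]
  have hlamI : ∀ n, lam (Icc (a n) (b n)) = 0 := by
    intro n
    have h1 : lam (Ioo (a n) (b n)) = 0 := by
      apply measure_mono_null _ hconc
      intro x hx
      exact (hIab n hx).2
    apply measure_mono_null
      (?_ : Icc (a n) (b n) ⊆ ({a n} ∪ Ioo (a n) (b n)) ∪ {b n})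
    · exact measure_union_null (measure_union_null (hatomless (a n)) h1) (hatomless (b n))
    · intro x hx
      rcases eq_or_lt_of_le hx.1 with he | hlt
      · exact Or.inl (Or.inl he.symm)
      · rcases eq_or_lt_of_le hx.2 with he2 | hlt2
        · exact Or.inr he2
        · exact Or.inl (Or.inr ⟨hlt, hlt2⟩)
  have hfconst : ∀ n, ∀ t ∈ Icc (a n) (b n), f t = f (a n) := by
    intro n t ht
    refine le_antisymm ?_ (hfmono ht.1)
    have h1 := hbound (a n) t ht.1
    have h2 : lam (Icc (a n) t) = 0 :=
      measure_mono_null (Icc_subset_Icc le_rfl ht.2) (hlamI n)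
    rw [h2] at h1
    simpa using h1
  have hfleM : ∀ x, f x ≤ M := by
    intro x
    rw [hf, hM]
    apply ENNReal.toReal_mono (hfin _)
    calc lam (Ioo 0 x) ≤ lam (Ioo 0 1 ∪ Lᶜ) := by
          apply measure_mono
          intro t _
          by_cases ht : t ∈ L
          · exact Or.inl (hL ht)
          · exact Or.inr ht
      _ ≤ lam (Ioo 0 1) + lam Lᶜ := measure_union_le _ _
      _ = lam (Ioo 0 1) := by rw [hconc, add_zero]
  have hM0 : 0 ≤ M := by rw [hM]; exact ENNReal.toReal_nonneg
  have hκg : ∀ t ∈ Ioo (0:ℝ) 1, κ (g t) = t := fun t ht => hκ.1 ht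
  have hgκ : ∀ x ∈ Ioo (0:ℝ) (1+M), g (κ x) = x := fun x hx => hκ.2 hx
  have hκmem : ∀ x ∈ Ioo (0:ℝ) (1+M), κ x ∈ Ioo (0:ℝ) 1 := by
    intro x hx
    constructor
    · by_contra h
      push_neg at h
      have h2 : g (κ x) ≤ g 0 := hgsm.monotone h
      rw [hgκ x hx, hg0] at h2
      linarith [hx.1]
    · by_contra h
      push_neg at h
      have h2 : g 1 ≤ g (κ x) := hgsm.monotone h
      rw [hgκ x hx, hg1] at h2
      linarith [hx.2]
  have hκK : ∀ n, ∀ x ∈ Ioo (a n + f (a n)) (b n + f (a n)),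
      κ x = x - f (a n) ∧ x - f (a n) ∈ Ioo (a n) (b n) := by
    intro n x hx
    have htmem : x - f (a n) ∈ Ioo (a n) (b n) := ⟨by linarith [hx.1], by linarith [hx.2]⟩
    have ht01 : x - f (a n) ∈ Ioo (0:ℝ) 1 := (hIab n htmem).1
    have hgt : g (x - f (a n)) = x := by
      show (x - f (a n)) + f (x - f (a n)) = x
      rw [hfconst n _ ⟨htmem.1.le, htmem.2.le⟩]
      ring
    have hκeq := hκg _ ht01
    rw [hgt] at hκeq
    exact ⟨hκeq, htmem⟩
  refine ⟨?_, ?_, ?_⟩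
  · -- constancy
    intro n x hx y hy
    obtain ⟨hκx, hxm⟩ := hκK n x hx
    obtain ⟨hκy, hym⟩ := hκK n y hy
    rw [hκx, hκy, hfconst n _ ⟨hxm.1.le, hxm.2.le⟩, hfconst n _ ⟨hym.1.le, hym.2.le⟩]
  · -- surjectivity
    intro v hv
    obtain ⟨t0, _, ht0⟩ : ∃ t ∈ Icc (0:ℝ) 1, f t = v := by
      have hIVT := intermediate_value_Icc (zero_le_one (α := ℝ)) hcont.continuousOn
      have hv' : v ∈ Icc (f 0) (f 1) := by
        rw [hf0 0 le_rfl, f1M]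
        exact ⟨hv.1.le, hv.2.le⟩
      exact hIVT hv'
    set S : Set ℝ := {t | f t = v} with hS
    have hSne : S.Nonempty := ⟨t0, ht0⟩
    have hSbdd : BddBelow S := by
      refine ⟨0, fun t ht => ?_⟩
      by_contra h
      push_neg at h
      rw [mem_setOf_eq, hf0 t h.le] at ht
      linarith [hv.1]
    have hSclosed : IsClosed S := isClosed_eq hcont continuous_const
    set c := sInf S with hc
    have hcS : c ∈ S := hSclosed.csInf_mem hSne hSbdd
    have hfc : f c = v := hcS
    have hc0 : 0 < c := by
      by_contra h
      push_neg at h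
      rw [hf0 c h] at hfc
      linarith [hv.1]
    have hc1 : c < 1 := by
      by_contra h
      push_neg at h
      have : M ≤ f c := f1M ▸ hfmono h
      linarith [hv.2]
    refine ⟨g c, ?_, ?_⟩
    · rw [hLhat]
      refine ⟨⟨by rw [← hg0]; exact hgsm hc0, by rw [← hg1]; exact hgsm hc1⟩, ?_⟩
      intro hmem
      obtain ⟨n, hn⟩ := mem_iUnion.mp hmem
      obtain ⟨hκgc, hmem'⟩ := hκK n (g c) hn
      have hceq : κ (g c) = c := hκg c ⟨hc0, hc1⟩
      rw [hceq] at hκgc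
      rw [← hκgc] at hmem'
      have hfa : f (a n) = v := by
        rw [← hfc, hfconst n c ⟨hmem'.1.le, hmem'.2.le⟩]
      have : c ≤ a n := csInf_le hSbdd hfa
      linarith [hmem'.1]
    · show f (κ (g c)) = v
      rw [hκg c ⟨hc0, hc1⟩, hfc]
  · -- measure part
    set J : ℕ → Set ℝ := fun n => Ioo (a n + f (a n)) (b n + f (a n)) with hJ
    have hLhatmeas : MeasurableSet Lhat := by
      rw [hLhat]
      exact measurableSet_Ioo.diff (MeasurableSet.iUnion fun n => measurableSet_Ioo)
    set κ' : ℝ → ℝ := fun x => if x ≤ 0 then 0 else if x < 1 + M then κ x else 1 with hκ'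
    have hκ'eq : ∀ x ∈ Ioo (0:ℝ) (1+M), κ' x = κ x := by
      intro x hx
      simp only [hκ']
      rw [if_neg (not_le.mpr hx.1), if_pos hx.2]
    have hκ'mono : Monotone κ' := by
      intro x y hxy
      simp only [hκ']
      by_cases hx0 : x ≤ 0
      · rw [if_pos hx0]
        by_cases hy0 : y ≤ 0
        · rw [if_pos hy0]
        · rw [if_neg hy0]
          push_neg at hy0
          by_cases hy1 : y < 1 + M
          · rw [if_pos hy1]; exact (hκmem y ⟨hy0, hy1⟩).1.le
          · rw [if_neg hy1]; exact zero_le_one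
      · push_neg at hx0
        have hy0 : ¬ y ≤ 0 := not_le.mpr (lt_of_lt_of_le hx0 hxy)
        rw [if_neg (not_le.mpr hx0), if_neg hy0]
        push_neg at hy0
        by_cases hx1 : x < 1 + M
        · rw [if_pos hx1]
          by_cases hy1 : y < 1 + M
          · rw [if_pos hy1]
            apply hgsm.le_iff_le.mp
            rw [hgκ x ⟨hx0, hx1⟩, hgκ y ⟨hy0, hy1⟩]
            exact hxy
          · rw [if_neg hy1]; exact (hκmem x ⟨hx0, hx1⟩).2.le
        · push_neg at hx1
          rw [if_neg (not_lt.mpr hx1), if_neg (not_lt.mpr (le_trans hx1 hxy))]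
    set D' : ℝ → ℝ := fun x => x - κ' x with hD'
    have hD'meas : Measurable D' := measurable_id.sub hκ'mono.measurable
    have hDeq : ∀ x ∈ Ioo (0:ℝ) (1+M), D' x = f (κ x) := by
      intro x hx
      have h1 := hgκ x hx
      simp only [hg] at h1
      simp only [hD']
      rw [hκ'eq x hx]
      linarith
    have hcongr : (fun x => f (κ x)) =ᵐ[volume.restrict Lhat] D' := by
      filter_upwards [ae_restrict_mem hLhatmeas] with x hx
      have hx' : x ∈ Ioo (0:ℝ) (1+M) := by
        rw [hLhat] at hx; exact hx.1
      exact (hDeq x hx').symm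
    rw [Measure.map_congr hcongr]
    have hJsub : ∀ n, J n ⊆ Ioo (0:ℝ) (1+M) := by
      intro n y hy
      constructor
      · have := ha0 n
        have := hfnn (a n)
        have := hy.1
        simp only [hJ, mem_Ioo] at hy ⊢
        linarith [hy.1]
      · have hgb : b n + f (a n) = g (b n) := by
          simp only [hg]
          rw [hfconst n (b n) ⟨(hab n).le, le_rfl⟩]
        have hgb1 : g (b n) ≤ g 1 := hgsm.monotone (hb1 n)
        rw [hg1] at hgb1
        simp only [hJ, mem_Ioo] at hy
        linarith [hy.2]
    have hJdisj : Pairwise (Function.onFun Disjoint J) := by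
      intro n m hnm
      rw [Function.onFun, Set.disjoint_left]
      intro x hxn hxm
      obtain ⟨en, mn⟩ := hκK n x hxn
      obtain ⟨em, mm⟩ := hκK m x hxm
      rw [← en] at mn
      rw [← em] at mm
      exact Set.disjoint_left.mp (hdisj hnm) mn mm
    have hkey : ∀ c : ℝ, c ∈ Icc (0:ℝ) 1 → (∀ n, c ∉ Ioo (a n) (b n)) →
        volume (Ioc 0 (g c) \ ⋃ n, J n) = ENNReal.ofReal (f c) := by
      intro c hcIcc hcnot
      have htri : ∀ n, b n ≤ c ∨ c ≤ a n := by
        intro n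
        by_contra h
        push_neg at h
        exact hcnot n ⟨h.2, h.1⟩
      have hterm : ∀ n, volume (Ioc 0 (g c) ∩ J n) = volume (Ioo 0 c ∩ Ioo (a n) (b n)) := by
        intro n
        rcases htri n with h | h
        · have h1 : Ioc 0 (g c) ∩ J n = J n := by
            apply inter_eq_self_of_subset_right
            intro y hy
            simp only [hJ, mem_Ioo] at hy
            constructor
            · have := ha0 n; have := hfnn (a n); linarith [hy.1]
            · have hgb : b n + f (a n) = g (b n) := by
                simp only [hg]
                rw [hfconst n (b n) ⟨(hab n).le, le_rfl⟩]
              have hgb1 : g (b n) ≤ g c := hgsm.monotone h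
              linarith [hy.2]
          have h2 : Ioo 0 c ∩ Ioo (a n) (b n) = Ioo (a n) (b n) := by
            apply inter_eq_self_of_subset_right
            intro y hy
            exact ⟨lt_of_le_of_lt (ha0 n) hy.1, lt_of_lt_of_le hy.2 h⟩
          rw [h1, h2]
          simp only [hJ]
          rw [Real.volume_Ioo, Real.volume_Ioo]
          congr 1
          ring
        · have h1 : Ioc 0 (g c) ∩ J n = ∅ := by
            rw [eq_empty_iff_forall_notMem]
            rintro y ⟨hy1, hy2⟩
            simp only [hJ, mem_Ioo] at hy2
            have hga : g c ≤ g (a n) := hgsm.monotone h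
            have : g (a n) = a n + f (a n) := rfl
            have := hy1.2
            linarith [hy2.1]
          have h2 : Ioo 0 c ∩ Ioo (a n) (b n) = ∅ := by
            rw [eq_empty_iff_forall_notMem]
            rintro y ⟨hy1, hy2⟩
            linarith [hy1.2, hy2.1]
          rw [h1, h2]
      have hsum1 : volume (Ioc 0 (g c) ∩ ⋃ n, J n) = ∑' n, volume (Ioc 0 (g c) ∩ J n) := by
        rw [inter_iUnion]
        exact measure_iUnion
          (fun n m hnm => Disjoint.mono inter_subset_right inter_subset_right (hJdisj hnm))
          (fun n => measurableSet_Ioc.inter measurableSet_Ioo)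
      have hsum2 : volume (Ioo 0 c \ L) = ∑' n, volume (Ioo 0 c ∩ Ioo (a n) (b n)) := by
        have hset : Ioo 0 c \ L = ⋃ n, Ioo 0 c ∩ Ioo (a n) (b n) := by
          rw [← inter_iUnion, ← hcompl]
          ext y
          constructor
          · rintro ⟨hy, hyL⟩
            exact ⟨hy, ⟨hy.1, lt_of_lt_of_le hy.2 hcIcc.2⟩, hyL⟩
          · rintro ⟨hy1, hy2⟩
            exact ⟨hy1, hy2.2⟩
        rw [hset]
        exact measure_iUnion
          (fun n m hnm => Disjoint.mono inter_subset_right inter_subset_right (hdisj hnm))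
          (fun n => measurableSet_Ioo.inter measurableSet_Ioo)
      have h3 : volume (Ioc 0 (g c) ∩ ⋃ n, J n) = ENNReal.ofReal c := by
        rw [hsum1, tsum_congr hterm, ← hsum2, measure_diff_null hnull, Real.volume_Ioo, sub_zero]
      have hdiffeq : Ioc 0 (g c) \ ⋃ n, J n = Ioc 0 (g c) \ (Ioc 0 (g c) ∩ ⋃ n, J n) :=
        (diff_self_inter).symm
      rw [hdiffeq, measure_diff inter_subset_left
        ((measurableSet_Ioc.inter (MeasurableSet.iUnion fun n => measurableSet_Ioo)).nullMeasurableSet)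
        (by rw [h3]; exact ENNReal.ofReal_ne_top), h3, Real.volume_Ioc, sub_zero,
        ← ENNReal.ofReal_sub _ hcIcc.1]
      congr 1
      simp only [hg]
      ring
    haveI hfinr : IsFiniteMeasure (volume.restrict Lhat) := by
      constructor
      rw [Measure.restrict_apply_univ]
      calc volume Lhat ≤ volume (Ioo (0:ℝ) (1+M)) := by
            apply measure_mono
            rw [hLhat]
            exact diff_subset
        _ < ⊤ := by rw [Real.volume_Ioo]; exact ENNReal.ofReal_lt_top
    apply Measure.ext_of_Iic
    intro v
    rw [Measure.map_apply hD'meas measurableSet_Iic,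
      Measure.restrict_apply (hD'meas measurableSet_Iic),
      Measure.restrict_apply measurableSet_Iic]
    rcases lt_or_ge v 0 with hv | hv
    · have h1 : D' ⁻¹' Iic v ∩ Lhat = ∅ := by
        rw [eq_empty_iff_forall_notMem]
        rintro x ⟨hx1, hx2⟩
        have hx' : x ∈ Ioo (0:ℝ) (1+M) := by rw [hLhat] at hx2; exact hx2.1
        have hd := hDeq x hx'
        have h0 : 0 ≤ D' x := hd ▸ hfnn _
        have hle : D' x ≤ v := hx1
        linarith
      have h2 : Iic v ∩ Ioo (0:ℝ) M = ∅ := by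
        rw [eq_empty_iff_forall_notMem]
        rintro x ⟨hx1, hx2⟩
        have : x ≤ v := hx1
        linarith [hx2.1]
      rw [h1, h2]
    rcases lt_or_ge v M with hvM | hvM
    · -- 0 ≤ v < M
      set T := {t : ℝ | t ∈ Icc (0:ℝ) 1 ∧ f t ≤ v} with hT
      have hTne : T.Nonempty := ⟨0, ⟨le_rfl, zero_le_one⟩, by rw [hf0 0 le_rfl]; exact hv⟩
      have hTbdd : BddAbove T := ⟨1, fun t ht => ht.1.2⟩
      have hTclosed : IsClosed T := by
        have : T = Icc (0:ℝ) 1 ∩ f ⁻¹' (Iic v) := rfl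
        rw [this]
        exact isClosed_Icc.inter (IsClosed.preimage hcont isClosed_Iic)
      set c := sSup T with hc
      have hcT : c ∈ T := hTclosed.csSup_mem hTne hTbdd
      have hfcv : f c = v := by
        refine le_antisymm hcT.2 ?_
        obtain ⟨t, htm, hft⟩ := intermediate_value_Icc (zero_le_one (α := ℝ)) hcont.continuousOn
          (show v ∈ Icc (f 0) (f 1) by rw [hf0 0 le_rfl, f1M]; exact ⟨hv, hvM.le⟩)
        have : t ≤ c := le_csSup hTbdd ⟨htm, hft.le⟩
        calc v = f t := hft.symm
          _ ≤ f c := hfmono this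
      have hc1 : c < 1 := by
        by_contra h
        push_neg at h
        have hceq : c = 1 := le_antisymm hcT.1.2 h
        rw [hceq, f1M] at hfcv
        linarith
      have hcnot : ∀ n, c ∉ Ioo (a n) (b n) := by
        intro n hcmem
        have hba : f (b n) = f (a n) := hfconst n (b n) ⟨(hab n).le, le_rfl⟩
        have hfc' : f (a n) = f c := (hfconst n c ⟨hcmem.1.le, hcmem.2.le⟩).symm
        have hbT : b n ∈ T :=
          ⟨⟨le_trans (ha0 n) (hab n).le, hb1 n⟩, by rw [hba, hfc', hfcv]⟩
        have : b n ≤ c := le_csSup hTbdd hbT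
        linarith [hcmem.2]
      have hsetid : D' ⁻¹' Iic v ∩ Lhat = Ioc 0 (g c) \ ⋃ n, J n := by
        rw [hLhat]
        ext x
        simp only [mem_inter_iff, mem_preimage, mem_Iic, mem_diff, mem_Ioc, mem_Ioo]
        constructor
        · rintro ⟨hx1, ⟨hx2, hx3⟩⟩
          have hDx := hDeq x hx2
          have hκx := hκmem x hx2
          have hκc : κ x ≤ c := le_csSup hTbdd ⟨⟨hκx.1.le, hκx.2.le⟩, by rw [← hDx]; exact hx1⟩
          have hxg : x ≤ g c := by
            have h4 := hgsm.monotone hκc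
            rwa [hgκ x hx2] at h4
          exact ⟨⟨hx2.1, hxg⟩, hx3⟩
        · rintro ⟨⟨hx1, hx2⟩, hx3⟩
          have hx' : x ∈ Ioo (0:ℝ) (1+M) :=
            ⟨hx1, lt_of_le_of_lt hx2 (by rw [← hg1]; exact hgsm hc1)⟩
          have hDx := hDeq x hx'
          have hκc : κ x ≤ c := by
            apply hgsm.le_iff_le.mp
            rw [hgκ x hx']
            exact hx2
          refine ⟨?_, hx', hx3⟩
          rw [hDx]
          calc f (κ x) ≤ f c := hfmono hκc
            _ = v := hfcv
      rw [hsetid, hkey c ⟨hcT.1.1, hcT.1.2⟩ hcnot, hfcv]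
      have hIic : Iic v ∩ Ioo (0:ℝ) M = Ioc 0 v := by
        ext x
        simp only [mem_inter_iff, mem_Iic, mem_Ioo, mem_Ioc]
        constructor
        · rintro ⟨h1, h2, _⟩
          exact ⟨h2, h1⟩
        · rintro ⟨h1, h2⟩
          exact ⟨h2, h1, lt_of_le_of_lt h2 hvM⟩
      rw [hIic, Real.volume_Ioc, sub_zero]
    · -- v ≥ M
      have hsetid : D' ⁻¹' Iic v ∩ Lhat = Lhat := by
        apply inter_eq_self_of_subset_right
        intro x hx
        have hx' : x ∈ Ioo (0:ℝ) (1+M) := by rw [hLhat] at hx; exact hx.1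
        have hDx := hDeq x hx'
        show D' x ≤ v
        rw [hDx]
        exact le_trans (hfleM _) hvM
      rw [hsetid]
      have h1 : volume Lhat = volume (Ioc 0 (1+M) \ ⋃ n, J n) := by
        rw [hLhat]
        apply le_antisymm (measure_mono (diff_subset_diff_left Ioo_subset_Ioc_self))
        calc volume (Ioc 0 (1+M) \ ⋃ n, J n)
            ≤ volume ((Ioo (0:ℝ) (1+M) \ ⋃ n, J n) ∪ {1+M}) := by
              apply measure_mono
              rintro x ⟨hx1, hx2⟩
              rcases lt_or_eq_of_le hx1.2 with h | h
              · exact Or.inl ⟨⟨hx1.1, h⟩, hx2⟩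
              · exact Or.inr h
          _ ≤ volume (Ioo (0:ℝ) (1+M) \ ⋃ n, J n) + volume {1+M} := measure_union_le _ _
          _ = volume (Ioo (0:ℝ) (1+M) \ ⋃ n, J n) := by
              rw [Real.volume_singleton, add_zero]
      rw [h1, (show Ioc (0:ℝ) (1+M) = Ioc 0 (g 1) by rw [hg1]),
        hkey 1 ⟨zero_le_one, le_rfl⟩ (fun n hm => absurd hm.2 (not_lt.mpr (hb1 n))), f1M]
      have hIic : Iic v ∩ Ioo (0:ℝ) M = Ioo 0 M := by
        apply inter_eq_self_of_subset_right
        intro x hx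
        exact le_trans hx.2.le hvM
      rw [hIic, Real.volume_Ioo, sub_zero]
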